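/- arXiv:2008.12929 — 3 statements merged into one kernel-verified Lean document; each statement's English description precedes it below -/
import Mathlib

section
/- Let M > 0 be a real number, q ≥ 1 an integer, and p ∈ {0,…,q−1} with gcd(p,q)=1. Then for every Schwartz function g : ℝ → ℂ one has ∑_{k∈ℤ} e^{−2πi p k²/q} ∫_ℝ g(x) e^{iMkx} dx = (2π/(Mq)) ∑_{m∈ℤ} G(−p, m mod q, q) · g(2πm/(Mq)), both series converging absolutely. -/
open Complex Finset

/-- Generalized quadratic Gauss sum `G(a,b,c) = ∑_{ℓ=0}^{c-1} e^{2πi(aℓ² + bℓ)/c}`. -/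
noncomputable def gaussSumGen (a b : ℤ) (c : ℕ) : ℂ :=
  ∑ ℓ ∈ Finset.range c,
    Complex.exp (2 * Real.pi * Complex.I * ((a : ℂ) * (ℓ : ℂ) ^ 2 + (b : ℂ) * (ℓ : ℂ)) / (c : ℂ))

section Aux

open Filter Asymptotics MeasureTheory Real FourierTransform SchwartzMap

lemma schwartz_summable_lattice (f : SchwartzMap ℝ ℂ) {c : ℝ} (hc : c ≠ 0) :
    Summable fun m : ℤ => ‖f (c * m)‖ := by
  have h1 : ⇑f =O[cocompact ℝ] (fun x : ℝ => ‖x‖ ^ (-2 : ℝ)) := f.isBigO_cocompact_rpow (-2)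
  have h2 : Filter.Tendsto (fun m : ℤ => c * (m : ℝ)) cofinite (cocompact ℝ) :=
    (Filter.tendsto_cocompact_mul_left₀ hc).comp Int.tendsto_coe_cofinite
  have h3 : (fun m : ℤ => f (c * m)) =O[cofinite] (fun m : ℤ => ‖c * (m : ℝ)‖ ^ (-2 : ℝ)) :=
    h1.comp_tendsto h2
  have h4 : (fun m : ℤ => ‖c * (m : ℝ)‖ ^ (-2 : ℝ))
      = fun m : ℤ => ‖c‖ ^ (-2 : ℝ) * |(m : ℝ)| ^ (-2 : ℝ) := by
    funext m
    rw [norm_mul, Real.mul_rpow (norm_nonneg _) (norm_nonneg _)]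
    rfl
  have h5 : (fun m : ℤ => f (c * m)) =O[cofinite] (fun m : ℤ => |(m : ℝ)| ^ (-2 : ℝ)) := by
    rw [h4] at h3
    exact h3.trans ((isBigO_refl _ _).const_mul_left _)
  exact (summable_of_isBigO (Real.summable_abs_int_rpow one_lt_two) h5).norm

lemma integral_exp_eq_fourier (g : SchwartzMap ℝ ℂ) (s : ℝ) :
    ∫ x : ℝ, g x * Complex.exp (Complex.I * (s : ℂ) * (x : ℂ))
      = FourierTransform.fourier (⇑g) (-(s / (2 * Real.pi))) := by
  rw [Real.fourier_real_eq_integral_exp_smul]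
  congr 1
  funext x
  rw [smul_eq_mul, mul_comm]
  congr 1
  push_cast
  congr 1
  have hπ : (Real.pi : ℂ) ≠ 0 := by exact_mod_cast Real.pi_ne_zero
  field_simp

lemma fourier_scaled (g : SchwartzMap ℝ ℂ) {a : ℝ} (ha : 0 < a) (ξ : ℝ) :
    FourierTransform.fourier
        (fun y : ℝ => (a : ℂ) * (SchwartzMap.fourierTransformCLM ℝ g) (a * y)) ξ
      = g (-(ξ / a)) := by
  set gh := SchwartzMap.fourierTransformCLM ℝ g with hgh
  have key : FourierTransform.fourier (fun y : ℝ => (a : ℂ) * gh (a * y)) ξ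
      = FourierTransform.fourier (⇑gh) (ξ / a) := by
    rw [Real.fourier_real_eq, Real.fourier_real_eq]
    have h1 : (fun v : ℝ => Real.fourierChar (-(v * ξ)) • ((a : ℂ) * gh (a * v)))
        = fun v : ℝ => (a : ℂ) * ((fun y : ℝ => Real.fourierChar (-(y * (ξ / a))) • gh y) (a * v)) := by
      funext v
      simp only [Circle.smul_def, smul_eq_mul]
      have : a * v * (ξ / a) = v * ξ := by field_simp
      rw [this]
      ring
    rw [h1, MeasureTheory.integral_const_mul, MeasureTheory.Measure.integral_comp_mul_left
      (fun y : ℝ => Real.fourierChar (-(y * (ξ / a))) • gh y) a]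
    rw [abs_of_pos (inv_pos.mpr ha)]
    rw [Complex.real_smul, ← mul_assoc, ← Complex.ofReal_mul, mul_inv_cancel₀ ha.ne',
      Complex.ofReal_one, one_mul]
  rw [key]
  have h2 : ⇑gh = FourierTransform.fourier (⇑g) := by
    rw [hgh, SchwartzMap.fourierTransformCLM_apply]; exact SchwartzMap.fourier_coe g
  have h3 := congrFun (Continuous.fourierInv_fourier_eq g.continuous g.integrable
    (by rw [← h2]; exact gh.integrable)) (-(ξ / a))
  rw [Real.fourierInv_eq_fourier_neg, neg_neg] at h3
  rw [h2, h3]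

lemma poisson_residue (M : ℝ) (hM : 0 < M) (q : ℕ) (hq : 1 ≤ q) (g : SchwartzMap ℝ ℂ) (ℓ : ℕ) :
    ∑' n : ℤ, (SchwartzMap.fourierTransformCLM ℝ g) (-(M * (q * n + ℓ)) / (2 * Real.pi))
      = ((2 * Real.pi / (M * q) : ℝ) : ℂ) *
          ∑' m : ℤ, Complex.exp (2 * Real.pi * Complex.I * ℓ * m / q) *
            g (2 * Real.pi * m / (M * q)) := by
  set gh := SchwartzMap.fourierTransformCLM ℝ g with hgh
  have hq0 : (0 : ℝ) < q := by exact_mod_cast hq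
  have hπ : (0 : ℝ) < Real.pi := Real.pi_pos
  set a : ℝ := M * q / (2 * Real.pi) with ha_def
  have ha : 0 < a := by positivity
  set x : ℝ := -(ℓ / q) with hx_def
  set F : ℝ → ℂ := fun y => (a : ℂ) * gh (a * y) with hF_def
  have hFT : ∀ ξ : ℝ, FourierTransform.fourier F ξ = g (-(ξ / a)) := fun ξ => fourier_scaled g ha ξ
  have hFf : Summable fun n : ℤ => FourierTransform.fourier F n := by
    have : (fun n : ℤ => FourierTransform.fourier F n) = fun n : ℤ => g ((-a⁻¹) * n) := by
      funext n; rw [hFT]; congr 1; field_simp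
    rw [this]
    exact (schwartz_summable_lattice g (neg_ne_zero.mpr (inv_ne_zero ha.ne'))).of_norm
  have hf : F =O[cocompact ℝ] (fun y : ℝ => |y| ^ (-2 : ℝ)) := by
    have h1 : ⇑gh =O[cocompact ℝ] (fun y : ℝ => ‖y‖ ^ (-2 : ℝ)) := gh.isBigO_cocompact_rpow (-2)
    have h2 : Filter.Tendsto (fun y : ℝ => a * y) (cocompact ℝ) (cocompact ℝ) :=
      Filter.tendsto_cocompact_mul_left₀ ha.ne'
    have h3 : (fun y : ℝ => gh (a * y)) =O[cocompact ℝ] (fun y : ℝ => ‖a * y‖ ^ (-2 : ℝ)) :=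
      h1.comp_tendsto h2
    have h4 : (fun y : ℝ => ‖a * y‖ ^ (-2 : ℝ))
        = fun y : ℝ => ‖a‖ ^ (-2 : ℝ) * |y| ^ (-2 : ℝ) := by
      funext y
      rw [norm_mul, Real.mul_rpow (norm_nonneg _) (norm_nonneg _)]
      rfl
    have h5 : (fun y : ℝ => gh (a * y)) =O[cocompact ℝ] (fun y : ℝ => |y| ^ (-2 : ℝ)) := by
      rw [h4] at h3
      exact h3.trans ((isBigO_refl _ _).const_mul_left _)
    simpa [hF_def] using h5.const_mul_left ((a : ℂ))
  have hpois := Real.tsum_eq_tsum_fourier_of_rpow_decay_of_summable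
    (by fun_prop : Continuous F) one_lt_two hf hFf x
  have hlhs : ∑' n : ℤ, gh (-(M * (q * n + ℓ)) / (2 * Real.pi))
      = (a : ℂ)⁻¹ * ∑' n : ℤ, F (x + n) := by
    have harg : ∀ n : ℤ, -(M * (q * (-n : ℤ) + ℓ)) / (2 * Real.pi) = a * (x + n) := by
      intro n
      push_cast
      rw [hx_def, ha_def]
      field_simp
      ring
    calc ∑' n : ℤ, gh (-(M * (q * n + ℓ)) / (2 * Real.pi))
        = ∑' n : ℤ, gh (-(M * (q * (-n : ℤ) + ℓ)) / (2 * Real.pi)) := by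
          exact ((Equiv.neg ℤ).tsum_eq fun n : ℤ =>
            gh (-(M * (q * n + ℓ)) / (2 * Real.pi))).symm
      _ = ∑' n : ℤ, gh (a * (x + n)) := by
          congr 1; funext n; rw [harg n]
      _ = (a : ℂ)⁻¹ * ∑' n : ℤ, F (x + n) := by
          rw [hF_def]
          simp only []
          rw [tsum_mul_left, ← mul_assoc, inv_mul_cancel₀ (by exact_mod_cast ha.ne' : (a:ℂ) ≠ 0),
            one_mul]
  have hrhs : ∑' n : ℤ, FourierTransform.fourier F n * fourier n (x : UnitAddCircle)
      = ∑' m : ℤ, Complex.exp (2 * Real.pi * Complex.I * ℓ * m / q) *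
          g (2 * Real.pi * m / (M * q)) := by
    rw [← (Equiv.neg ℤ).tsum_eq fun n : ℤ => FourierTransform.fourier F n *
      fourier n (x : UnitAddCircle)]
    congr 1
    funext m
    simp only [Equiv.neg_apply]
    rw [hFT, fourier_coe_apply, mul_comm]
    have hq0' : (q : ℂ) ≠ 0 := by exact_mod_cast hq0.ne'
    congr 1
    · congr 1
      rw [hx_def]
      push_cast
      field_simp
    · congr 1
      rw [ha_def]
      push_cast
      field_simp
  rw [hlhs, hpois, hrhs]
  congr 1
  rw [ha_def]
  push_cast
  rw [inv_div]

lemma norm_exp_unit (r : ℝ) (z : ℂ) (h : z = (r : ℂ) * Complex.I) : ‖Complex.exp z‖ = 1 := by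
  rw [h, Complex.norm_exp_ofReal_mul_I]

def residueEquiv (q : ℕ) (hq : 1 ≤ q) : (Fin q) × ℤ ≃ ℤ where
  toFun p := q * p.2 + (p.1 : ℕ)
  invFun k := (⟨(k % q).toNat, by
    have h1 : 0 ≤ k % q := Int.emod_nonneg k (by exact_mod_cast Nat.one_le_iff_ne_zero.mp hq : (q:ℤ) ≠ 0)
    have h2 : k % q < q := Int.emod_lt_of_pos k (by exact_mod_cast hq)
    omega⟩, k / q)
  left_inv := by
    rintro ⟨ℓ, n⟩
    have hℓ : (0:ℤ) ≤ (ℓ : ℕ) := by positivity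
    have hℓq : ((ℓ : ℕ) : ℤ) < q := by exact_mod_cast ℓ.2
    have hq0 : (q : ℤ) ≠ 0 := by exact_mod_cast Nat.one_le_iff_ne_zero.mp hq
    have hmod : ((q : ℤ) * n + (ℓ : ℕ)) % q = (ℓ : ℕ) := by
      rw [add_comm, Int.add_mul_emod_self_left, Int.emod_eq_of_lt hℓ hℓq]
    have hdiv : ((q : ℤ) * n + (ℓ : ℕ)) / q = n := by
      rw [add_comm, Int.add_mul_ediv_left _ _ hq0, Int.ediv_eq_zero_of_lt hℓ hℓq, zero_add]
    ext
    · simp [hmod]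
    · simp [hdiv]
  right_inv := by
    intro k
    have h1 : 0 ≤ k % q := Int.emod_nonneg k (by exact_mod_cast Nat.one_le_iff_ne_zero.mp hq)
    simp only []
    rw [Int.toNat_of_nonneg h1]
    exact Int.mul_ediv_add_emod k q

end Aux

lemma exp_eq_exp_of_sub_int (x y : ℂ) (n : ℤ) (h : x - y = (n : ℂ) * (2 * Real.pi * Complex.I)) :
    Complex.exp x = Complex.exp y := by
  have hx : x = y + (n : ℂ) * (2 * Real.pi * Complex.I) := by linear_combination h
  rw [hx, Complex.exp_add, Complex.exp_int_mul_two_pi_mul_I, mul_one]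


/-- Tested form of Proposition 3.4: pairing the Schrödinger evolution of the Dirac comb of
period `2π/M` at the rational time `t_{M,p,q}` against a Schwartz function `g` yields the
atomic measure `(2π/(Mq)) ∑_m G(-p, m mod q, q) δ_{2πm/(Mq)}`, both series converging
absolutely. -/
theorem dirac_comb_evolution_tested (M : ℝ) (hM : 0 < M) (q : ℕ) (hq : 1 ≤ q)
    (p : ℕ) (hp : p < q) (hcop : Nat.Coprime p q) (g : SchwartzMap ℝ ℂ) :
    (Summable fun k : ℤ =>
      ‖Complex.exp (-2 * Real.pi * Complex.I * (p : ℂ) * (k : ℂ) ^ 2 / (q : ℂ)) *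
        ∫ x : ℝ, g x * Complex.exp (Complex.I * (M : ℂ) * (k : ℂ) * (x : ℂ))‖) ∧
    (Summable fun m : ℤ =>
      ‖gaussSumGen (-(p : ℤ)) (m % (q : ℤ)) q * g (2 * Real.pi * m / (M * q))‖) ∧
    (∑' k : ℤ,
        Complex.exp (-2 * Real.pi * Complex.I * (p : ℂ) * (k : ℂ) ^ 2 / (q : ℂ)) *
          ∫ x : ℝ, g x * Complex.exp (Complex.I * (M : ℂ) * (k : ℂ) * (x : ℂ)))
      = (2 * Real.pi / (M * q) : ℝ) *
          ∑' m : ℤ, gaussSumGen (-(p : ℤ)) (m % (q : ℤ)) q * g (2 * Real.pi * m / (M * q)) := by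
  have hπ : (0 : ℝ) < Real.pi := Real.pi_pos
  have hq0 : (0 : ℝ) < q := by exact_mod_cast hq
  have hqC : (q : ℂ) ≠ 0 := by exact_mod_cast hq0.ne'
  set gh := SchwartzMap.fourierTransformCLM ℝ g with hgh
  set cM : ℝ := -M / (2 * Real.pi) with hcM
  have hcMne : cM ≠ 0 := by
    rw [hcM]
    refine ne_of_lt (div_neg_of_neg_of_pos (by linarith) (by positivity))
  -- integral identity
  have hint : ∀ k : ℤ, (∫ x : ℝ, g x * Complex.exp (Complex.I * (M : ℂ) * (k : ℂ) * (x : ℂ)))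
      = gh (cM * k) := by
    intro k
    have h0 : (∫ x : ℝ, g x * Complex.exp (Complex.I * (M : ℂ) * (k : ℂ) * (x : ℂ)))
        = ∫ x : ℝ, g x * Complex.exp (Complex.I * ((M * k : ℝ) : ℂ) * (x : ℂ)) := by
      congr 1; funext x; push_cast; ring_nf
    rw [h0, integral_exp_eq_fourier g (M * k)]
    have h2 : ⇑gh = FourierTransform.fourier (⇑g) := by
      rw [hgh, SchwartzMap.fourierTransformCLM_apply]; exact SchwartzMap.fourier_coe g
    rw [h2]
    congr 1
    rw [hcM]
    field_simp
  -- phases have norm 1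
  have hphasenorm : ∀ k : ℤ,
      ‖Complex.exp (-2 * Real.pi * Complex.I * (p : ℂ) * (k : ℂ) ^ 2 / (q : ℂ))‖ = 1 := by
    intro k
    exact norm_exp_unit (-2 * Real.pi * p * (k : ℝ) ^ 2 / q) _ (by push_cast; ring)
  set A : ℤ → ℂ := fun k =>
    Complex.exp (-2 * Real.pi * Complex.I * (p : ℂ) * (k : ℂ) ^ 2 / (q : ℂ)) * gh (cM * k)
    with hA_def
  have hAnorm : Summable fun k : ℤ => ‖A k‖ := by
    have h := schwartz_summable_lattice gh hcMne
    refine h.congr fun k => ?_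
    simp only [hA_def]
    rw [norm_mul, hphasenorm, one_mul]
  have hgsum : Summable fun m : ℤ => ‖g (2 * Real.pi * m / (M * q))‖ := by
    have h := schwartz_summable_lattice g
      (show (2 * Real.pi / (M * q) : ℝ) ≠ 0 from by positivity)
    refine h.congr fun m => ?_
    rw [show (2 * Real.pi / (M * q)) * (m : ℝ) = 2 * Real.pi * m / (M * q) from by ring]
  have hgaussbound : ∀ m : ℤ, ‖gaussSumGen (-(p : ℤ)) (m % (q : ℤ)) q‖ ≤ q := by
    intro m
    rw [gaussSumGen]
    refine le_trans (norm_sum_le _ _) (le_trans (Finset.sum_le_sum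
      (g := fun _ : ℕ => (1 : ℝ)) (fun i _ => le_of_eq (norm_exp_unit
        (2 * Real.pi * ((-(p : ℤ)) * (i : ℝ) ^ 2 + ((m % (q : ℤ) : ℤ) : ℝ) * i) / q) _
        (by push_cast; ring)))) (by simp))
  refine ⟨?_, ?_, ?_⟩
  · refine hAnorm.congr fun k => ?_
    rw [hint k]
  · refine Summable.of_nonneg_of_le (fun m => norm_nonneg _)
      (fun m => by
        rw [norm_mul]
        exact mul_le_mul_of_nonneg_right (hgaussbound m) (norm_nonneg _))
      (hgsum.mul_left (q : ℝ))
  -- the equality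
  have hA : Summable A := hAnorm.of_norm
  have hAe : Summable (A ∘ (residueEquiv q hq)) := (residueEquiv q hq).summable_iff.mpr hA
  have hsum_lm : ∀ ℓ : Fin q, Summable fun m : ℤ =>
      Complex.exp (-2 * Real.pi * Complex.I * (p : ℂ) * ((ℓ : ℕ) : ℂ) ^ 2 / (q : ℂ)) *
        Complex.exp (2 * Real.pi * Complex.I * ((ℓ : ℕ) : ℂ) * (m : ℂ) / (q : ℂ)) *
          g (2 * Real.pi * m / (M * q)) := by
    intro ℓ
    apply Summable.of_norm
    refine hgsum.congr fun m => ?_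
    rw [norm_mul, norm_mul,
      norm_exp_unit (-2 * Real.pi * p * ((ℓ : ℕ) : ℝ) ^ 2 / q) _ (by push_cast; ring),
      norm_exp_unit (2 * Real.pi * ((ℓ : ℕ) : ℝ) * (m : ℝ) / q) _ (by push_cast; ring),
      one_mul, one_mul]
  have hgauss : ∀ m : ℤ,
      (∑ ℓ : Fin q,
        Complex.exp (-2 * Real.pi * Complex.I * (p : ℂ) * ((ℓ : ℕ) : ℂ) ^ 2 / (q : ℂ)) *
          Complex.exp (2 * Real.pi * Complex.I * ((ℓ : ℕ) : ℂ) * (m : ℂ) / (q : ℂ)))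
        = gaussSumGen (-(p : ℤ)) (m % (q : ℤ)) q := by
    intro m
    rw [Fin.sum_univ_eq_sum_range (fun ℓ : ℕ =>
      Complex.exp (-2 * Real.pi * Complex.I * (p : ℂ) * (ℓ : ℂ) ^ 2 / (q : ℂ)) *
        Complex.exp (2 * Real.pi * Complex.I * (ℓ : ℂ) * (m : ℂ) / (q : ℂ))) q]
    rw [gaussSumGen]
    refine Finset.sum_congr rfl fun ℓ _ => ?_
    rw [← Complex.exp_add]
    refine exp_eq_exp_of_sub_int _ _ (m / (q : ℤ) * ℓ) ?_
    have hm : ((m : ℂ)) = (q : ℂ) * ((m / (q : ℤ) : ℤ) : ℂ) + ((m % (q : ℤ) : ℤ) : ℂ) := by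
      exact_mod_cast congrArg (Int.cast : ℤ → ℂ) (Int.mul_ediv_add_emod m q).symm
    rw [hm]
    push_cast
    field_simp
    ring
  have step4 : ∀ ℓ : Fin q, ∑' n : ℤ, A ((q : ℤ) * n + ((ℓ : ℕ) : ℤ))
      = Complex.exp (-2 * Real.pi * Complex.I * (p : ℂ) * ((ℓ : ℕ) : ℂ) ^ 2 / (q : ℂ)) *
          (((2 * Real.pi / (M * q) : ℝ) : ℂ) *
            ∑' m : ℤ, Complex.exp (2 * Real.pi * Complex.I * ((ℓ : ℕ) : ℂ) * (m : ℂ) / (q : ℂ)) *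
              g (2 * Real.pi * m / (M * q))) := by
    intro ℓ
    have hterm : ∀ n : ℤ, A ((q : ℤ) * n + ((ℓ : ℕ) : ℤ))
        = Complex.exp (-2 * Real.pi * Complex.I * (p : ℂ) * ((ℓ : ℕ) : ℂ) ^ 2 / (q : ℂ)) *
            gh (-(M * ((q : ℝ) * (n : ℝ) + ((ℓ : ℕ) : ℝ))) / (2 * Real.pi)) := by
      intro n
      simp only [hA_def]
      congr 1
      · have ht : (-2 * (Real.pi : ℂ) * Complex.I * (p : ℂ) *
              (((q : ℤ) * n + ((ℓ : ℕ) : ℤ) : ℤ) : ℂ) ^ 2 / (q : ℂ))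
            = -2 * (Real.pi : ℂ) * Complex.I * (p : ℂ) * ((ℓ : ℕ) : ℂ) ^ 2 / (q : ℂ)
              + ((-(p : ℤ) * n * ((q : ℤ) * n + 2 * ((ℓ : ℕ) : ℤ)) : ℤ) : ℂ) *
                  (2 * Real.pi * Complex.I) := by
          push_cast
          field_simp
          ring
        rw [ht, Complex.exp_add, Complex.exp_int_mul_two_pi_mul_I, mul_one]
      · congr 1
        rw [hcM]
        push_cast
        ring
    calc ∑' n : ℤ, A ((q : ℤ) * n + ((ℓ : ℕ) : ℤ))
        = ∑' n : ℤ, Complex.exp (-2 * Real.pi * Complex.I * (p : ℂ) * ((ℓ : ℕ) : ℂ) ^ 2 / (q : ℂ)) *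
            gh (-(M * ((q : ℝ) * (n : ℝ) + ((ℓ : ℕ) : ℝ))) / (2 * Real.pi)) :=
          tsum_congr hterm
      _ = Complex.exp (-2 * Real.pi * Complex.I * (p : ℂ) * ((ℓ : ℕ) : ℂ) ^ 2 / (q : ℂ)) *
            ∑' n : ℤ, gh (-(M * ((q : ℝ) * (n : ℝ) + ((ℓ : ℕ) : ℝ))) / (2 * Real.pi)) :=
          tsum_mul_left
      _ = _ := by rw [poisson_residue M hM q hq g ℓ]
  calc (∑' k : ℤ,
        Complex.exp (-2 * Real.pi * Complex.I * (p : ℂ) * (k : ℂ) ^ 2 / (q : ℂ)) *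
          ∫ x : ℝ, g x * Complex.exp (Complex.I * (M : ℂ) * (k : ℂ) * (x : ℂ)))
      = ∑' k : ℤ, A k := by
        refine tsum_congr fun k => ?_
        rw [hint k]
    _ = ∑' pnl : Fin q × ℤ, A ((residueEquiv q hq) pnl) := ((residueEquiv q hq).tsum_eq A).symm
    _ = ∑' ℓ : Fin q, ∑' n : ℤ, A ((residueEquiv q hq) (ℓ, n)) := hAe.tsum_prod
    _ = ∑ ℓ : Fin q, ∑' n : ℤ, A ((q : ℤ) * n + ((ℓ : ℕ) : ℤ)) := by
        rw [tsum_fintype]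
        rfl
    _ = ∑ ℓ : Fin q,
          Complex.exp (-2 * Real.pi * Complex.I * (p : ℂ) * ((ℓ : ℕ) : ℂ) ^ 2 / (q : ℂ)) *
            (((2 * Real.pi / (M * q) : ℝ) : ℂ) *
              ∑' m : ℤ, Complex.exp (2 * Real.pi * Complex.I * ((ℓ : ℕ) : ℂ) * (m : ℂ) / (q : ℂ)) *
                g (2 * Real.pi * m / (M * q))) :=
        Finset.sum_congr rfl fun ℓ _ => step4 ℓ
    _ = ((2 * Real.pi / (M * q) : ℝ) : ℂ) * ∑ ℓ : Fin q,
          ∑' m : ℤ,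
            Complex.exp (-2 * Real.pi * Complex.I * (p : ℂ) * ((ℓ : ℕ) : ℂ) ^ 2 / (q : ℂ)) *
              Complex.exp (2 * Real.pi * Complex.I * ((ℓ : ℕ) : ℂ) * (m : ℂ) / (q : ℂ)) *
                g (2 * Real.pi * m / (M * q)) := by
        rw [Finset.mul_sum]
        refine Finset.sum_congr rfl fun ℓ _ => ?_
        rw [show (∑' m : ℤ,
            Complex.exp (-2 * Real.pi * Complex.I * (p : ℂ) * ((ℓ : ℕ) : ℂ) ^ 2 / (q : ℂ)) *
              Complex.exp (2 * Real.pi * Complex.I * ((ℓ : ℕ) : ℂ) * (m : ℂ) / (q : ℂ)) *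
                g (2 * Real.pi * m / (M * q)))
          = Complex.exp (-2 * Real.pi * Complex.I * (p : ℂ) * ((ℓ : ℕ) : ℂ) ^ 2 / (q : ℂ)) *
              ∑' m : ℤ, Complex.exp (2 * Real.pi * Complex.I * ((ℓ : ℕ) : ℂ) * (m : ℂ) / (q : ℂ)) *
                g (2 * Real.pi * m / (M * q)) from by
          rw [← tsum_mul_left]
          exact tsum_congr fun m => (mul_assoc _ _ _)]
        ring
    _ = ((2 * Real.pi / (M * q) : ℝ) : ℂ) *
          ∑' m : ℤ, ∑ ℓ : Fin q,
            Complex.exp (-2 * Real.pi * Complex.I * (p : ℂ) * ((ℓ : ℕ) : ℂ) ^ 2 / (q : ℂ)) *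
              Complex.exp (2 * Real.pi * Complex.I * ((ℓ : ℕ) : ℂ) * (m : ℂ) / (q : ℂ)) *
                g (2 * Real.pi * m / (M * q)) := by
        congr 1
        exact (Summable.tsum_finsetSum fun ℓ _ => hsum_lm ℓ).symm
    _ = ((2 * Real.pi / (M * q) : ℝ) : ℂ) *
          ∑' m : ℤ, gaussSumGen (-(p : ℤ)) (m % (q : ℤ)) q * g (2 * Real.pi * m / (M * q)) := by
        congr 1
        refine tsum_congr fun m => ?_
        rw [← Finset.sum_mul, hgauss m]
end

section
/- Let q ≥ 1 be an integer, p ∈ {0,…,q−1} with gcd(p,q)=1, and κ ∈ {0,…,q−1}. Let φ : ℝ → ℂ be a C² function with support contained in [−1,1] and φ(0)=1. Then G(−p,κ,q) = ∑_{k∈ℤ} e^{2πi(−p k² + κ k)/q} ∫_ℝ φ(u) e^{2πi k u/q} du, the series converging absolutely. -/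
open Complex Finset

section Aux

open Filter Asymptotics Real MeasureTheory FourierTransform

/-- Decay of the Fourier transform of a `C²` compactly supported function. -/
lemma fourier_decay_aux {f : ℝ → ℂ} (hf : ContDiff ℝ 2 f) (hs : HasCompactSupport f) :
    (𝓕 f) =O[Filter.cocompact ℝ] (fun x : ℝ => |x| ^ (-2 : ℝ)) := by
  have h'f : ∀ (k n : ℕ), k ≤ (0:ℕ∞) → n ≤ (2:ℕ∞) →
      Integrable (fun v : ℝ ↦ ‖v‖^k * ‖iteratedFDeriv ℝ n f v‖) := by
    intro k n hk hn
    have hk0 : k = 0 := by exact_mod_cast le_antisymm hk zero_le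
    subst hk0
    simp only [pow_zero, one_mul]
    exact ((hf.continuous_iteratedFDeriv (by exact_mod_cast hn)).norm).integrable_of_hasCompactSupport
      (hs.iteratedFDeriv n).norm
  have key := fun w => Real.pow_mul_norm_iteratedFDeriv_fourier_le (K := 0) (N := 2)
    hf h'f le_rfl le_rfl w (k := 0) (n := 2)
  set C : ℝ := (2 * π) ^ 0 * (2 * 0 + 2) ^ 2 *
      ∑ p ∈ Finset.range (0 + 1) ×ˢ Finset.range (2 + 1),
        ∫ v : ℝ, ‖v‖ ^ p.1 * ‖iteratedFDeriv ℝ p.2 f v‖ with hC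
  have key' : ∀ w : ℝ, |w| ^ 2 * ‖𝓕 f w‖ ≤ C := by
    intro w
    have h := key w
    rw [norm_iteratedFDeriv_zero, Real.norm_eq_abs] at h
    rw [hC]
    exact h.trans_eq (by norm_num)
  rw [isBigO_iff]
  refine ⟨C, ?_⟩
  have hev : ∀ᶠ x : ℝ in cocompact ℝ, 1 ≤ |x| := by
    have : ∀ᶠ x : ℝ in cocompact ℝ, x ∉ Set.Icc (-1:ℝ) 1 :=
      (isCompact_Icc (α := ℝ)).compl_mem_cocompact
    filter_upwards [this] with x hx
    by_contra h
    push_neg at h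
    exact hx ⟨neg_le_of_abs_le h.le, le_of_abs_le h.le⟩
  filter_upwards [hev] with x hx
  have hx0 : (0:ℝ) < |x| := lt_of_lt_of_le one_pos hx
  have hrw : |x| ^ (-2 : ℝ) = (|x| ^ 2)⁻¹ := by
    rw [Real.rpow_neg (abs_nonneg x), ← Real.rpow_natCast |x| 2]; norm_num
  rw [Real.norm_eq_abs, _root_.abs_of_nonneg (by positivity : (0:ℝ) ≤ |x| ^ (-2:ℝ)), hrw]
  have hxne : |x| ≠ 0 := ne_of_gt hx0
  have hxne2 : x ≠ 0 := abs_ne_zero.mp hxne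
  calc ‖𝓕 f x‖ = (|x|^2)⁻¹ * (|x|^2 * ‖𝓕 f x‖) := by field_simp
    _ ≤ (|x|^2)⁻¹ * C := by
        exact mul_le_mul_of_nonneg_left (key' x) (by positivity)
    _ = C * (|x|^2)⁻¹ := by ring

/-- `|x| ^ (-2)` for nonzero `x`. -/
lemma abs_rpow_neg_two_aux (x : ℝ) (hx : x ≠ 0) : |x| ^ (-2:ℝ) = (x^2)⁻¹ := by
  rw [Real.rpow_neg (abs_nonneg x)]
  congr 1
  rw [show ((2:ℝ)) = ((2:ℕ):ℝ) by norm_num, Real.rpow_natCast, _root_.sq_abs]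

/-- the equivalence `Fin q × ℤ ≃ ℤ`, `(ℓ, m) ↦ ℓ + q m`. -/
def finIntEquiv (q : ℕ) (hq : 0 < q) : Fin q × ℤ ≃ ℤ where
  toFun x := (x.1 : ℤ) + q * x.2
  invFun k := (⟨(k % q).toNat, by
      have h0 : (0:ℤ) < q := by exact_mod_cast hq
      have h1 : 0 ≤ k % q := Int.emod_nonneg k (ne_of_gt h0)
      have h2 : k % q < q := Int.emod_lt_of_pos k h0
      omega⟩, k / q)
  left_inv := by
    rintro ⟨⟨ℓ, hℓ⟩, m⟩
    have h0 : (0:ℤ) < q := by exact_mod_cast hq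
    have hmod : ((ℓ:ℤ) + q * m) % q = ℓ := by
      rw [Int.add_mul_emod_self_left, Int.emod_eq_of_lt (by positivity) (by exact_mod_cast hℓ)]
    have hdiv : ((ℓ:ℤ) + q * m) / q = m := by
      rw [Int.add_mul_ediv_left _ _ (ne_of_gt h0),
        Int.ediv_eq_zero_of_lt (by positivity) (by exact_mod_cast hℓ), zero_add]
    simp only [hmod, hdiv, Prod.mk.injEq]
    exact ⟨by apply Fin.ext; simp, trivial⟩
  right_inv := by
    intro k
    have h0 : (0:ℤ) < q := by exact_mod_cast hq
    have h1 : 0 ≤ k % q := Int.emod_nonneg k (ne_of_gt h0)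
    simp only [Int.toNat_of_nonneg h1]
    rw [Int.emod_add_mul_ediv]

/-- Summability of samples of a function with quadratic Fourier-type decay. -/
lemma summable_samples_aux (q : ℕ) (hq : 1 ≤ q) {g : ℝ → ℂ}
    (hg : g =O[Filter.cocompact ℝ] (fun x : ℝ => |x| ^ (-2:ℝ))) :
    Summable fun k : ℤ => ‖g (-(k:ℝ)/q)‖ := by
  have hq0 : (0:ℝ) < q := by exact_mod_cast hq
  have hne : (-1/(q:ℝ)) ≠ 0 := by
    apply div_ne_zero (by norm_num) (ne_of_gt hq0)
  have hh : Filter.Tendsto (fun k : ℤ => -(k:ℝ)/q) Filter.cofinite (Filter.cocompact ℝ) := by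
    have h1 : Filter.Tendsto (fun x : ℝ => x * (-1/q)) (Filter.cocompact ℝ)
        (Filter.cocompact ℝ) := (Homeomorph.mulRight₀ (-1/(q:ℝ)) hne).map_cocompact.le
    have h2 := h1.comp Int.tendsto_coe_cofinite
    refine h2.congr fun k => ?_
    simp only [Function.comp]
    ring
  apply summable_of_isBigO (Real.summable_abs_int_rpow one_lt_two)
  have hO1 : (fun k : ℤ => ‖g (-(k:ℝ)/q)‖) =O[Filter.cofinite]
      (fun k : ℤ => |(-(k:ℝ)/q)| ^ (-2:ℝ)) := (hg.norm_left).comp_tendsto hh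
  refine hO1.trans (IsBigO.of_bound ((q:ℝ)^2) ?_)
  refine Filter.Eventually.of_forall fun k => ?_
  rcases eq_or_ne k 0 with rfl | hk
  · simp [Real.zero_rpow (by norm_num : (-2:ℝ) ≠ 0)]
  · have hkR : (k:ℝ) ≠ 0 := Int.cast_ne_zero.mpr hk
    have hx : (-(k:ℝ)/q) ≠ 0 := by
      apply div_ne_zero (by simpa using hkR) (ne_of_gt hq0)
    rw [Real.norm_eq_abs, Real.norm_eq_abs, abs_rpow_neg_two_aux _ hx, abs_rpow_neg_two_aux _ hkR,
      _root_.abs_of_nonneg (by positivity : (0:ℝ) ≤ ((k:ℝ)^2)⁻¹),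
      _root_.abs_of_nonneg (by positivity : (0:ℝ) ≤ ((-(k:ℝ)/q)^2)⁻¹)]
    have heq : ((-(k:ℝ)/q)^2)⁻¹ = (q:ℝ)^2 * ((k:ℝ)^2)⁻¹ := by
      field_simp
    rw [heq]

end Aux

section Aux2
open Filter Asymptotics Real MeasureTheory FourierTransform
variable {φ : ℝ → ℂ}

lemma hcs_aux (hsupp : Function.support φ ⊆ Set.Icc (-1) 1) : HasCompactSupport φ :=
  IsCompact.of_isClosed_subset isCompact_Icc isClosed_closure
    (closure_minimal hsupp isClosed_Icc)

lemma boundary_zero (hφ : Continuous φ) (hsupp : Function.support φ ⊆ Set.Icc (-1) 1) :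
    φ 1 = 0 ∧ φ (-1) = 0 := by
  have key : ∀ x : ℝ, ∀ l : Filter ℝ, l ≤ nhds x → l.NeBot →
      (∀ᶠ y in l, φ y = 0) → φ x = 0 := by
    intro x l hl hb hev
    have h1 : Filter.Tendsto φ l (nhds (φ x)) := (hφ.tendsto x).mono_left hl
    have h2 : Filter.Tendsto φ l (nhds 0) := by
      rw [Filter.tendsto_congr' hev]
      exact tendsto_const_nhds
    exact tendsto_nhds_unique h1 h2
  constructor
  · refine key 1 (nhdsWithin 1 (Set.Ioi 1)) nhdsWithin_le_nhds inferInstance ?_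
    filter_upwards [self_mem_nhdsWithin] with y hy
    by_contra h
    have := hsupp h
    rw [Set.mem_Icc] at this
    rw [Set.mem_Ioi] at hy
    linarith [this.2]
  · refine key (-1) (nhdsWithin (-1) (Set.Iio (-1))) nhdsWithin_le_nhds inferInstance ?_
    filter_upwards [self_mem_nhdsWithin] with y hy
    by_contra h
    have := hsupp h
    rw [Set.mem_Icc] at this
    rw [Set.mem_Iio] at hy
    linarith [this.1]

lemma hvan_aux (hφ : Continuous φ) (hsupp : Function.support φ ⊆ Set.Icc (-1) 1) :
    ∀ n : ℤ, n ≠ 0 → φ (n : ℝ) = 0 := by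
  intro n hn
  rcases lt_trichotomy n 1 with h | h | h
  · rcases lt_trichotomy n (-1) with h' | h' | h'
    · by_contra hc
      have := hsupp hc
      rw [Set.mem_Icc] at this
      have : ((n:ℝ)) < -1 := by exact_mod_cast h'
      linarith [(hsupp hc).1]
    · rw [h']; exact_mod_cast (boundary_zero hφ hsupp).2
    · omega
  · rw [h]; exact_mod_cast (boundary_zero hφ hsupp).1
  · by_contra hc
    have h2 : (1:ℝ) < (n:ℝ) := by exact_mod_cast h
    linarith [(hsupp hc).2]

lemma integral_eq_fourier_aux (q : ℕ) (hq : 1 ≤ q) (k : ℤ) :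
    (∫ u : ℝ, φ u * Complex.exp (2 * Real.pi * Complex.I * (k:ℂ) * (u:ℂ) / (q:ℂ)))
      = 𝓕 φ (-(k:ℝ)/q) := by
  have hqC : (q:ℂ) ≠ 0 := Nat.cast_ne_zero.mpr (by omega)
  rw [Real.fourier_real_eq_integral_exp_smul]
  refine integral_congr_ae (Filter.Eventually.of_forall fun u => ?_)
  simp only [smul_eq_mul]
  rw [mul_comm]
  congr 1
  push_cast
  field_simp

lemma poisson_core (q : ℕ) (hq : 1 ≤ q) (hφ : ContDiff ℝ 2 φ)
    (hsupp : Function.support φ ⊆ Set.Icc (-1) 1) (hφ0 : φ 0 = 1) (ℓ : ℕ) :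
    Summable (fun m : ℤ => ∫ u : ℝ, φ u *
      Complex.exp (2 * Real.pi * Complex.I * ((((ℓ:ℤ) + (q:ℤ) * m) : ℤ) : ℂ) * (u : ℂ) / (q : ℂ)))
    ∧ ∑' m : ℤ, ∫ u : ℝ, φ u *
      Complex.exp (2 * Real.pi * Complex.I * ((((ℓ:ℤ) + (q:ℤ) * m) : ℤ) : ℂ) * (u : ℂ) / (q : ℂ)) = 1 := by
  have hqC : (q:ℂ) ≠ 0 := Nat.cast_ne_zero.mpr (by omega)
  set F : ℤ → ℂ := fun k => ∫ u : ℝ, φ u *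
      Complex.exp (2 * Real.pi * Complex.I * (k : ℂ) * (u : ℂ) / (q : ℂ)) with hF
  have hgoal1 : ∀ m : ℤ, (∫ u : ℝ, φ u *
      Complex.exp (2 * Real.pi * Complex.I * ((((ℓ:ℤ) + (q:ℤ) * m) : ℤ) : ℂ) * (u : ℂ) / (q : ℂ)))
      = F ((ℓ:ℤ) + (q:ℤ) * m) := fun m => rfl
  simp only [hgoal1]
  -- the modulated function
  set ψ : ℝ → ℂ := fun u => φ u * Complex.exp (2 * Real.pi * Complex.I * (ℓ:ℂ) * (u:ℂ) / (q:ℂ)) with hψ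
  have hψc : ContDiff ℝ 2 ψ := by
    have h1 : ContDiff ℝ 2 (fun u : ℝ => ((u:ℂ))) := Complex.ofRealCLM.contDiff.of_le le_top
    have h2 : ContDiff ℝ 2 (fun u : ℝ => 2 * (Real.pi:ℂ) * Complex.I * (ℓ:ℂ) * (u:ℂ) / (q:ℂ)) :=
      (contDiff_const.mul h1).div_const _
    exact hφ.mul h2.cexp
  have hψs : HasCompactSupport ψ := (hcs_aux hsupp).mul_right
  have hψO : ψ =O[Filter.cocompact ℝ] (fun x : ℝ => |x| ^ (-2:ℝ)) := by
    have hev : ∀ᶠ x in Filter.cocompact ℝ, ψ x = 0 := by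
      filter_upwards [hψs.compl_mem_cocompact] with x hx
      exact image_eq_zero_of_notMem_tsupport hx
    rw [Asymptotics.isBigO_iff]
    exact ⟨0, by filter_upwards [hev] with x hx; simp [hx]⟩
  have hFψ : Summable fun n : ℤ => 𝓕 ψ n :=
    summable_of_isBigO (Real.summable_abs_int_rpow one_lt_two)
      ((fourier_decay_aux hψc hψs).comp_tendsto Int.tendsto_coe_cofinite)
  have hP := Real.tsum_eq_tsum_fourier_of_rpow_decay_of_summable hψc.continuous
    one_lt_two hψO hFψ 0
  -- identify the Fourier transform values
  have hFT : ∀ m : ℤ, 𝓕 ψ m = F ((ℓ:ℤ) - (q:ℤ) * m) := by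
    intro m
    rw [Real.fourier_real_eq_integral_exp_smul, hF]
    refine integral_congr_ae (Filter.Eventually.of_forall fun u => ?_)
    simp only [smul_eq_mul, hψ]
    rw [show Complex.exp (↑(-2 * Real.pi * u * (m:ℝ)) * Complex.I) *
        (φ u * Complex.exp (2 * Real.pi * Complex.I * (ℓ:ℂ) * (u:ℂ) / (q:ℂ)))
      = φ u * (Complex.exp (↑(-2 * Real.pi * u * (m:ℝ)) * Complex.I) *
        Complex.exp (2 * Real.pi * Complex.I * (ℓ:ℂ) * (u:ℂ) / (q:ℂ))) by ring, ← Complex.exp_add]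
    congr 1
    push_cast
    field_simp
    ring
  -- left side of Poisson is 1
  have hLHS : ∑' n : ℤ, ψ ((0:ℝ) + (n:ℤ)) = 1 := by
    rw [tsum_eq_single 0]
    · simp [hψ, hφ0]
    · intro n hn
      simp only [hψ, zero_add]
      rw [hvan_aux hφ.continuous hsupp n hn, zero_mul]
  -- right side
  have hRHS : ∑' m : ℤ, 𝓕 ψ m * fourier m ((0:ℝ) : UnitAddCircle) = ∑' m : ℤ, F ((ℓ:ℤ) - (q:ℤ) * m) := by
    refine tsum_congr fun m => ?_
    rw [hFT m]
    norm_num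
  have key : ∑' m : ℤ, F ((ℓ:ℤ) - (q:ℤ) * m) = 1 := by
    rw [← hRHS, ← hP, hLHS]
  -- summability of the (ℓ - qm) family, then reindex by negation
  have hs1 : Summable (fun m : ℤ => F ((ℓ:ℤ) - (q:ℤ) * m)) := by
    refine hFψ.congr fun m => ?_
    exact hFT m
  have hneg : ∀ m : ℤ, (fun m : ℤ => F ((ℓ:ℤ) + (q:ℤ) * m)) ((Equiv.neg ℤ) m)
      = F ((ℓ:ℤ) - (q:ℤ) * m) := by
    intro m
    simp only [Equiv.neg_apply]
    congr 1
    ring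
  have hs2 : Summable (fun m : ℤ => F ((ℓ:ℤ) + (q:ℤ) * m)) := by
    rw [← Equiv.summable_iff (Equiv.neg ℤ)]
    exact hs1.congr fun m => (hneg m).symm
  refine ⟨hs2, ?_⟩
  rw [← Equiv.tsum_eq (Equiv.neg ℤ) (fun m : ℤ => F ((ℓ:ℤ) + (q:ℤ) * m))]
  rw [tsum_congr hneg]
  exact key

end Aux2

set_option maxHeartbeats 2000000 in
/-- Tested form of Corollary 3.5 (with `M = 2π`): the generalized quadratic Gauss sum
`G(-p,κ,q)` is recovered exactly as `∑_{k∈ℤ} e^{2πi(-pk² + κk)/q} ∫ φ(u) e^{2πiku/q} du`,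
for any C² function `φ` supported in `[-1,1]` with `φ(0) = 1`. -/
theorem gaussSum_recovered_exactly (q : ℕ) (hq : 1 ≤ q) (p : ℕ) (hp : p < q)
    (hcop : Nat.Coprime p q) (κ : ℕ) (hκ : κ < q)
    (φ : ℝ → ℂ) (hφ : ContDiff ℝ 2 φ) (hsupp : Function.support φ ⊆ Set.Icc (-1) 1)
    (hφ0 : φ 0 = 1) :
    (Summable fun k : ℤ =>
      ‖Complex.exp (2 * Real.pi * Complex.I * ((-(p : ℤ) : ℂ) * (k : ℂ) ^ 2 + (κ : ℂ) * (k : ℂ)) / (q : ℂ)) *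
        ∫ u : ℝ, φ u * Complex.exp (2 * Real.pi * Complex.I * (k : ℂ) * (u : ℂ) / (q : ℂ))‖) ∧
    gaussSumGen (-(p : ℤ)) (κ : ℤ) q
      = ∑' k : ℤ,
          Complex.exp (2 * Real.pi * Complex.I * ((-(p : ℤ) : ℂ) * (k : ℂ) ^ 2 + (κ : ℂ) * (k : ℂ)) / (q : ℂ)) *
            ∫ u : ℝ, φ u * Complex.exp (2 * Real.pi * Complex.I * (k : ℂ) * (u : ℂ) / (q : ℂ)) := by
  have hq0 : 0 < q := hq
  have hqC : (q:ℂ) ≠ 0 := Nat.cast_ne_zero.mpr (by omega)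
  set c : ℤ → ℂ := fun k => Complex.exp (2 * Real.pi * Complex.I *
      ((-(p : ℤ) : ℂ) * (k : ℂ) ^ 2 + (κ : ℂ) * (k : ℂ)) / (q : ℂ)) with hc
  set F : ℤ → ℂ := fun k => ∫ u : ℝ, φ u *
      Complex.exp (2 * Real.pi * Complex.I * (k : ℂ) * (u : ℂ) / (q : ℂ)) with hF
  have hnorm : ∀ k : ℤ, ‖c k‖ = 1 := by
    intro k
    rw [hc]
    simp only
    rw [show (2 * (Real.pi:ℂ) * Complex.I * ((-(p:ℤ):ℂ) * (k:ℂ)^2 + (κ:ℂ) * (k:ℂ)) / (q:ℂ))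
        = (((2 * Real.pi * ((-(p:ℤ):ℝ) * (k:ℝ)^2 + (κ:ℝ) * (k:ℝ)) / (q:ℝ)) : ℝ) : ℂ) *
          Complex.I by push_cast; ring]
    rw [Complex.norm_exp_ofReal_mul_I]
  have hφO := fourier_decay_aux hφ (hcs_aux hsupp)
  have hS : Summable (fun k : ℤ => ‖c k * F k‖) := by
    refine (summable_samples_aux q hq hφO).congr fun k => ?_
    rw [norm_mul, hnorm k, one_mul, hF]
    simp only
    rw [integral_eq_fourier_aux q hq k]
  refine ⟨hS, ?_⟩
  have hsum : Summable (fun k : ℤ => c k * F k) := hS.of_norm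
  set e := finIntEquiv q hq0 with he
  have h1 : ∑' k : ℤ, c k * F k = ∑' x : Fin q × ℤ, c (e x) * F (e x) :=
    (Equiv.tsum_eq e fun k => c k * F k).symm
  have hsum2 : Summable (fun x : Fin q × ℤ => c (e x) * F (e x)) :=
    (Equiv.summable_iff e).mpr hsum
  have hper : ∀ (a m : ℤ), c (a + q * m) = c a := by
    intro a m
    rw [hc]
    simp only
    rw [show (2 * (Real.pi:ℂ) * Complex.I *
          ((-(p:ℤ):ℂ) * (((a + q*m : ℤ)):ℂ)^2 + (κ:ℂ) * (((a + q*m : ℤ)):ℂ)) / (q:ℂ))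
        = 2 * (Real.pi:ℂ) * Complex.I * ((-(p:ℤ):ℂ) * (a:ℂ)^2 + (κ:ℂ) * (a:ℂ)) / (q:ℂ)
          + ((-(p:ℤ) * (2*a*m + q*m^2) + κ*m : ℤ) : ℂ) * (2 * Real.pi * Complex.I) by
        push_cast; field_simp; ring]
    rw [Complex.exp_add, Complex.exp_int_mul_two_pi_mul_I, mul_one]
  have hpc : ∀ ℓ : ℕ, Summable (fun m : ℤ => F ((ℓ:ℤ) + (q:ℤ) * m)) ∧
      ∑' m : ℤ, F ((ℓ:ℤ) + (q:ℤ) * m) = 1 :=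
    fun ℓ => poisson_core q hq hφ hsupp hφ0 ℓ
  have hinner : ∀ ℓ : Fin q, Summable (fun m : ℤ =>
      c (((ℓ:ℕ):ℤ) + q * m) * F (((ℓ:ℕ):ℤ) + q * m)) := by
    intro ℓ
    refine Summable.congr (((hpc (ℓ:ℕ)).1).mul_left (c ((ℓ:ℕ):ℤ))) fun m => ?_
    rw [hper]
  have h2 : ∑' x : Fin q × ℤ, c (e x) * F (e x)
      = ∑ ℓ : Fin q, ∑' m : ℤ, c (((ℓ:ℕ):ℤ) + q * m) * F (((ℓ:ℕ):ℤ) + q * m) := by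
    rw [Summable.tsum_prod' hsum2 (fun ℓ => hinner ℓ), tsum_fintype]
    exact Finset.sum_congr rfl fun b _ => tsum_congr fun m => rfl
  have h3 : ∀ ℓ : Fin q, ∑' m : ℤ, c (((ℓ:ℕ):ℤ) + q * m) * F (((ℓ:ℕ):ℤ) + q * m)
      = c ((ℓ:ℕ):ℤ) := by
    intro ℓ
    calc ∑' m : ℤ, c (((ℓ:ℕ):ℤ) + q * m) * F (((ℓ:ℕ):ℤ) + q * m)
        = ∑' m : ℤ, c ((ℓ:ℕ):ℤ) * F (((ℓ:ℕ):ℤ) + q * m) := tsum_congr fun m => by rw [hper]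
      _ = c ((ℓ:ℕ):ℤ) * ∑' m : ℤ, F (((ℓ:ℕ):ℤ) + q * m) := tsum_mul_left
      _ = c ((ℓ:ℕ):ℤ) := by rw [(hpc (ℓ:ℕ)).2, mul_one]
  rw [h1, h2]
  simp only [h3]
  rw [gaussSumGen, ← Fin.sum_univ_eq_sum_range]
  refine Finset.sum_congr rfl fun x _ => ?_
  simp only [hc]
  congr 1
  push_cast
  ring
end

section
/- Let L ∈ ℕ, let c_{−L},…,c_L ∈ ℂ, let V(x) = ∑_{|ℓ|≤L} c_ℓ e^{iℓx}, and let α, ω ∈ ℝ, T ∈ (0,∞]. Let φ : [0,T) × ℝ → ℂ be a C² function, 2π-periodic in x, satisfying i ∂φ/∂t + α ∂²φ/∂x² = V(x + 2ωt) φ on [0,T) × ℝ. For k ∈ ℤ define ĉ_k(t) = (1/2π) ∫_0^{2π} φ(t,x) e^{−ikx} dx and ψ_k(t) = e^{iαk²t} ĉ_k(t). Then each ψ_k is differentiable on [0,T) and satisfies i ψ_k'(t) = ∑_{|ℓ|≤L} c_ℓ e^{2iℓωt} e^{iαℓ(2k−ℓ)t} ψ_{k−ℓ}(t) for all t ∈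 [0,T) and all k ∈ ℤ. -/
open Complex Finset

/-- Smooth-solution version of Lemma 4.1 for a trigonometric-polynomial potential
`V(x) = ∑_{|ℓ|≤L} c_ℓ e^{iℓx}`: if `φ` is a C² solution, 2π-periodic in `x`, of
`i ∂ₜφ + α ∂ₓₓφ = V(x + 2ωt) φ` on `[0,T) × ℝ`, then the modified Fourier coefficients
`ψ_k(t) = e^{iαk²t} ĉ_k(t)` are differentiable on `[0,T)` and satisfy the coupled system
`i ψ_k'(t) = ∑_{|ℓ|≤L} c_ℓ e^{2iℓωt} e^{iαℓ(2k-ℓ)t} ψ_{k-ℓ}(t)`. -/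
theorem fourier_coefficients_system (L : ℕ) (c : ℤ → ℂ) (α ω : ℝ) (T : EReal) (hT : 0 < T)
    (φ : ℝ → ℝ → ℂ) (hφ : ContDiff ℝ 2 fun p : ℝ × ℝ => φ p.1 p.2)
    (hper : ∀ t x : ℝ, φ t (x + 2 * Real.pi) = φ t x)
    (hPDE : ∀ t x : ℝ, 0 ≤ t → (t : EReal) < T →
        Complex.I * deriv (fun s => φ s x) t + (α : ℂ) * iteratedDeriv 2 (fun y => φ t y) x
          = (∑ ℓ ∈ Finset.Icc (-(L : ℤ)) (L : ℤ),
              c ℓ * Complex.exp (Complex.I * (ℓ : ℂ) * ((x : ℂ) + 2 * (ω : ℂ) * (t : ℂ)))) *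
            φ t x)
    (ψ : ℤ → ℝ → ℂ)
    (hψ : ∀ (k : ℤ) (t : ℝ),
      ψ k t = Complex.exp (Complex.I * (α : ℂ) * (k : ℂ) ^ 2 * (t : ℂ)) *
        ((1 / (2 * (Real.pi : ℂ))) *
          ∫ x in (0 : ℝ)..(2 * Real.pi), φ t x * Complex.exp (-Complex.I * (k : ℂ) * (x : ℂ)))) :
    ∀ (k : ℤ) (t : ℝ), 0 ≤ t → (t : EReal) < T →
      HasDerivWithinAt (ψ k)
        (-Complex.I *
          ∑ ℓ ∈ Finset.Icc (-(L : ℤ)) (L : ℤ),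
            c ℓ * Complex.exp (2 * Complex.I * (ℓ : ℂ) * (ω : ℂ) * (t : ℂ)) *
              Complex.exp (Complex.I * (α : ℂ) * (ℓ : ℂ) * (2 * (k : ℂ) - (ℓ : ℂ)) * (t : ℂ)) *
              ψ (k - ℓ) t)
        {s : ℝ | 0 ≤ s ∧ (s : EReal) < T} t := by
  intro k t ht0 htT
  set S : Finset ℤ := Finset.Icc (-(L : ℤ)) (L : ℤ) with hS
  -- derivative of complex exponentials of a real variable
  have hexp : ∀ (m : ℂ) (x : ℝ),
      HasDerivAt (fun y : ℝ => Complex.exp (m * y)) (m * Complex.exp (m * x)) x := by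
    intro m x
    have H : HasDerivAt (fun z : ℂ => Complex.exp (m * z)) (m * Complex.exp (m * (x:ℂ))) (x:ℂ) := by
      simpa [mul_comm, Function.comp_def] using (Complex.hasDerivAt_exp (m * (x:ℂ))).comp (x:ℂ)
        ((hasDerivAt_id (x:ℂ)).const_mul m)
    exact H.comp_ofReal
  have hexpcont : ∀ m : ℂ, Continuous (fun y : ℝ => Complex.exp (m * y)) :=
    fun m => Complex.continuous_exp.comp (continuous_const.mul Complex.continuous_ofReal)
  have hnorm : ∀ (n : ℤ) (x : ℝ), ‖Complex.exp (-Complex.I * (n : ℂ) * (x : ℂ))‖ = 1 := by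
    intro n x
    have : -Complex.I * (n : ℂ) * (x : ℂ) = ((-(n * x) : ℝ) : ℂ) * Complex.I := by
      push_cast; ring
    rw [this, Complex.norm_exp_ofReal_mul_I]
  -- partial derivative in time
  set f : ℝ × ℝ → ℂ := fun p => φ p.1 p.2 with hf
  set dt : ℝ × ℝ → ℂ := fun p => fderiv ℝ f p ((1:ℝ), (0:ℝ)) with hdtdef
  have hdt : ∀ (s x : ℝ), HasDerivAt (fun s' => φ s' x) (dt (s, x)) s := by
    intro s x
    have h1 : HasFDerivAt f (fderiv ℝ f (s, x)) (s, x) :=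
      ((hφ.differentiable (by norm_num)) (s, x)).hasFDerivAt
    have h2 : HasDerivAt (fun s' : ℝ => ((s' : ℝ), x)) ((1 : ℝ), (0 : ℝ)) s :=
      (hasDerivAt_id s).prodMk (hasDerivAt_const s x)
    exact h1.comp_hasDerivAt s h2
  have hdtc : Continuous dt := by
    rw [hdtdef]
    exact (hφ.continuous_fderiv (by norm_num)).clm_apply continuous_const
  -- space regularity
  have hxCD : ∀ s : ℝ, ContDiff ℝ 2 fun y => φ s y :=
    fun s => hφ.comp (contDiff_const.prodMk contDiff_id)
  have hxcont : ∀ s : ℝ, Continuous fun y => φ s y := fun s => (hxCD s).continuous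
  have hd1 : ∀ (s x : ℝ), HasDerivAt (fun y => φ s y) (deriv (fun y => φ s y) x) x :=
    fun s x => (((hxCD s).differentiable (by norm_num)) x).hasDerivAt
  have hderivC1 : ∀ s : ℝ, ContDiff ℝ 1 (deriv fun y => φ s y) := by
    intro s
    have h2 : ContDiff ℝ ((1:ℕ) + 1) fun y => φ s y := by exact_mod_cast hxCD s
    exact (contDiff_succ_iff_deriv.mp h2).2.2
  have hitd : ∀ s : ℝ, iteratedDeriv 2 (fun y => φ s y) = deriv (deriv fun y => φ s y) := by
    intro s; rw [iteratedDeriv_succ, iteratedDeriv_one]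
  have hd2 : ∀ (s x : ℝ),
      HasDerivAt (deriv fun y => φ s y) (iteratedDeriv 2 (fun y => φ s y) x) x := by
    intro s x
    rw [hitd s]
    exact (((hderivC1 s).differentiable one_ne_zero) x).hasDerivAt
  have hd2c : ∀ s : ℝ, Continuous (iteratedDeriv 2 fun y => φ s y) := by
    intro s
    rw [hitd s]
    exact (hderivC1 s).continuous_deriv le_rfl
  -- periodicity
  have hperiodic : ∀ s : ℝ, Function.Periodic (fun y => φ s y) (2 * Real.pi) :=
    fun s x => hper s x
  have hgb : ∀ s : ℝ, φ s (2 * Real.pi) = φ s 0 := by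
    intro s; simpa using hperiodic s 0
  have hdgb : ∀ s : ℝ, deriv (fun y => φ s y) (2 * Real.pi) = deriv (fun y => φ s y) 0 := by
    intro s
    have h1 := deriv_comp_add_const (fun y => φ s y) (2 * Real.pi) 0
    simp only [hper s] at h1
    rw [zero_add] at h1
    exact h1.symm
  -- boundary values of the exponential weight
  have hEb : ∀ n : ℤ, Complex.exp (-Complex.I * (n : ℂ) * ((2 * Real.pi : ℝ) : ℂ)) = 1 := by
    intro n
    have : -Complex.I * (n : ℂ) * ((2 * Real.pi : ℝ) : ℂ)
        = ((-n : ℤ) : ℂ) * (2 * (Real.pi : ℂ) * Complex.I) := by push_cast; ring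
    rw [this, Complex.exp_int_mul_two_pi_mul_I]
  have hE0 : ∀ n : ℤ, Complex.exp (-Complex.I * (n : ℂ) * ((0 : ℝ) : ℂ)) = 1 := by
    intro n; simp
  -- integration by parts (twice)
  have ibp : ∀ (s : ℝ) (n : ℤ),
      (∫ x in (0:ℝ)..(2 * Real.pi),
          iteratedDeriv 2 (fun y => φ s y) x * Complex.exp (-Complex.I * (n : ℂ) * (x : ℂ)))
        = -((n : ℂ))^2 * ∫ x in (0:ℝ)..(2 * Real.pi),
            φ s x * Complex.exp (-Complex.I * (n : ℂ) * (x : ℂ)) := by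
    intro s n
    set m : ℂ := -Complex.I * (n : ℂ) with hm
    have hEc : Continuous fun x : ℝ => Complex.exp (m * x) := hexpcont m
    have hEb' : Complex.exp (m * ((2 * Real.pi : ℝ) : ℂ)) = 1 := by rw [hm]; exact hEb n
    have hE0' : Complex.exp (m * ((0 : ℝ) : ℂ)) = 1 := by rw [hm]; exact hE0 n
    have hm2 : m * m = -((n : ℂ)) ^ 2 := by
      rw [hm]; linear_combination ((n : ℂ) ^ 2) * Complex.I_sq
    have h1 : (∫ x in (0:ℝ)..(2 * Real.pi),
          Complex.exp (m * x) * iteratedDeriv 2 (fun y => φ s y) x)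
        = - ∫ x in (0:ℝ)..(2 * Real.pi),
            (m * Complex.exp (m * x)) * deriv (fun y => φ s y) x := by
      have := intervalIntegral.integral_mul_deriv_eq_deriv_mul
        (u := fun x : ℝ => Complex.exp (m * x)) (u' := fun x : ℝ => m * Complex.exp (m * x))
        (v := deriv fun y => φ s y) (v' := iteratedDeriv 2 fun y => φ s y)
        (a := 0) (b := 2 * Real.pi)
        (fun x _ => hexp m x) (fun x _ => hd2 s x)
        ((continuous_const.mul hEc).intervalIntegrable _ _)
        ((hd2c s).intervalIntegrable _ _)
      rw [this, hdgb s]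
      simp only [hEb', hE0']
      ring
    have h2 : (∫ x in (0:ℝ)..(2 * Real.pi), Complex.exp (m * x) * deriv (fun y => φ s y) x)
        = - ∫ x in (0:ℝ)..(2 * Real.pi), (m * Complex.exp (m * x)) * φ s x := by
      have := intervalIntegral.integral_mul_deriv_eq_deriv_mul
        (u := fun x : ℝ => Complex.exp (m * x)) (u' := fun x : ℝ => m * Complex.exp (m * x))
        (v := fun y => φ s y) (v' := deriv fun y => φ s y)
        (a := 0) (b := 2 * Real.pi)
        (fun x _ => hexp m x) (fun x _ => hd1 s x)
        ((continuous_const.mul hEc).intervalIntegrable _ _)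
        (((hderivC1 s).continuous).intervalIntegrable _ _)
      rw [this]
      simp only [hEb', hE0', hgb s]
      ring
    have hpull : ∀ (Gf : ℝ → ℂ),
        (∫ x in (0:ℝ)..(2 * Real.pi), (m * Complex.exp (m * x)) * Gf x)
          = m * ∫ x in (0:ℝ)..(2 * Real.pi), Complex.exp (m * x) * Gf x := by
      intro Gf
      rw [← intervalIntegral.integral_const_mul]
      exact intervalIntegral.integral_congr fun x _ => by ring
    have comm1 : (∫ x in (0:ℝ)..(2 * Real.pi),
        iteratedDeriv 2 (fun y => φ s y) x * Complex.exp (m * x))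
        = ∫ x in (0:ℝ)..(2 * Real.pi),
            Complex.exp (m * x) * iteratedDeriv 2 (fun y => φ s y) x :=
      intervalIntegral.integral_congr fun x _ => mul_comm _ _
    have comm2 : (∫ x in (0:ℝ)..(2 * Real.pi), φ s x * Complex.exp (m * x))
        = ∫ x in (0:ℝ)..(2 * Real.pi), Complex.exp (m * x) * φ s x :=
      intervalIntegral.integral_congr fun x _ => mul_comm _ _
    calc (∫ x in (0:ℝ)..(2 * Real.pi),
          iteratedDeriv 2 (fun y => φ s y) x * Complex.exp (m * (x:ℂ)))
        = ∫ x in (0:ℝ)..(2 * Real.pi),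
            Complex.exp (m * x) * iteratedDeriv 2 (fun y => φ s y) x := comm1
      _ = - (m * ∫ x in (0:ℝ)..(2 * Real.pi),
              Complex.exp (m * x) * deriv (fun y => φ s y) x) := by rw [h1, hpull]
      _ = - (m * -(m * ∫ x in (0:ℝ)..(2 * Real.pi), Complex.exp (m * x) * φ s x)) := by
            rw [h2, hpull]
      _ = -((n:ℂ))^2 * ∫ x in (0:ℝ)..(2 * Real.pi), φ s x * Complex.exp (m * (x:ℂ)) := by
            rw [comm2]
            linear_combination
              (∫ x in (0:ℝ)..(2 * Real.pi), Complex.exp (m * (x:ℂ)) * φ s x) * hm2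
  -- Fourier integrals
  set G : ℤ → ℝ → ℂ := fun n s =>
    ∫ x in (0:ℝ)..(2 * Real.pi), φ s x * Complex.exp (-Complex.I * (n : ℂ) * (x : ℂ)) with hG
  -- differentiation under the integral sign
  have hDF : HasDerivAt (G k)
      (∫ x in (0:ℝ)..(2 * Real.pi), dt (t, x) * Complex.exp (-Complex.I * (k : ℂ) * (x : ℂ))) t := by
    obtain ⟨M, hM⟩ := ((isCompact_closedBall t 1).prod
      (isCompact_uIcc (a := (0:ℝ)) (b := 2 * Real.pi))).exists_bound_of_continuousOn
      hdtc.continuousOn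
    have key := intervalIntegral.hasDerivAt_integral_of_dominated_loc_of_deriv_le
      (F := fun s x => φ s x * Complex.exp (-Complex.I * (k : ℂ) * (x : ℂ)))
      (F' := fun s x => dt (s, x) * Complex.exp (-Complex.I * (k : ℂ) * (x : ℂ)))
      (x₀ := t) (a := 0) (b := 2 * Real.pi) (bound := fun _ => M)
      (μ := MeasureTheory.volume) (s := Metric.ball t 1) (Metric.ball_mem_nhds t one_pos)
      (Filter.Eventually.of_forall fun s =>
        (((hxcont s).mul (hexpcont _)).aestronglyMeasurable))
      (((hxcont t).mul (hexpcont _)).intervalIntegrable _ _)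
      (((hdtc.comp (Continuous.prodMk_right t)).mul (hexpcont _)).aestronglyMeasurable)
      (MeasureTheory.ae_of_all _ fun x hx s hs => by
        rw [norm_mul, hnorm k x, mul_one]
        exact hM (s, x) ⟨Metric.ball_subset_closedBall hs, Set.Ioc_subset_Icc_self hx⟩)
      (intervalIntegrable_const)
      (MeasureTheory.ae_of_all _ fun x _ s _ => (hdt s x).mul_const _)
    simp only [hG]
    exact key.2
  -- pointwise identity from the PDE
  have hpt : ∀ x : ℝ, dt (t, x) * Complex.exp (-Complex.I * (k : ℂ) * (x : ℂ))
      = (Complex.I * (α : ℂ)) *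
          (iteratedDeriv 2 (fun y => φ t y) x * Complex.exp (-Complex.I * (k : ℂ) * (x : ℂ)))
        + ∑ ℓ ∈ S, (-Complex.I * (c ℓ * Complex.exp (2 * Complex.I * (ℓ : ℂ) * (ω : ℂ) * (t : ℂ)))) *
            (φ t x * Complex.exp (-Complex.I * ((k - ℓ : ℤ) : ℂ) * (x : ℂ))) := by
    intro x
    have h := hPDE t x ht0 htT
    rw [(hdt t x).deriv] at h
    have hsum : ∑ ℓ ∈ S,
        (-Complex.I * (c ℓ * Complex.exp (2 * Complex.I * (ℓ : ℂ) * (ω : ℂ) * (t : ℂ)))) *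
          (φ t x * Complex.exp (-Complex.I * ((k - ℓ : ℤ) : ℂ) * (x : ℂ)))
        = (-Complex.I * (φ t x * Complex.exp (-Complex.I * (k : ℂ) * (x : ℂ)))) *
            ∑ ℓ ∈ S, c ℓ * Complex.exp (Complex.I * (ℓ : ℂ) * ((x : ℂ) + 2 * (ω : ℂ) * (t : ℂ))) := by
      rw [Finset.mul_sum]
      refine Finset.sum_congr rfl fun ℓ _ => ?_
      have he : Complex.exp (2 * Complex.I * (ℓ : ℂ) * (ω : ℂ) * (t : ℂ)) *
            Complex.exp (-Complex.I * ((k - ℓ : ℤ) : ℂ) * (x : ℂ))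
          = Complex.exp (Complex.I * (ℓ : ℂ) * ((x : ℂ) + 2 * (ω : ℂ) * (t : ℂ))) *
              Complex.exp (-Complex.I * (k : ℂ) * (x : ℂ)) := by
        rw [← Complex.exp_add, ← Complex.exp_add]; congr 1; push_cast; ring
      linear_combination (-Complex.I * c ℓ * φ t x) * he
    rw [hsum]
    linear_combination (-Complex.I * Complex.exp (-Complex.I * (k : ℂ) * (x : ℂ))) * h
      + (Complex.exp (-Complex.I * (k : ℂ) * (x : ℂ)) * dt (t, x)) * Complex.I_sq
  -- evaluation of the derivative integral
  have hval : (∫ x in (0:ℝ)..(2 * Real.pi),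
        dt (t, x) * Complex.exp (-Complex.I * (k : ℂ) * (x : ℂ)))
      = (Complex.I * (α : ℂ)) * (-((k : ℂ))^2 * G k t)
        + -Complex.I * ∑ ℓ ∈ S,
            (c ℓ * Complex.exp (2 * Complex.I * (ℓ : ℂ) * (ω : ℂ) * (t : ℂ))) * G (k - ℓ) t := by
    rw [intervalIntegral.integral_congr (fun x _ => hpt x)]
    rw [intervalIntegral.integral_add
      (f := fun x => (Complex.I * (α : ℂ)) *
          (iteratedDeriv 2 (fun y => φ t y) x * Complex.exp (-Complex.I * (k : ℂ) * (x : ℂ))))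
      (g := fun x => ∑ ℓ ∈ S, (-Complex.I * (c ℓ * Complex.exp (2 * Complex.I * (ℓ : ℂ) * (ω : ℂ) * (t : ℂ)))) *
          (φ t x * Complex.exp (-Complex.I * ((k - ℓ : ℤ) : ℂ) * (x : ℂ))))
      ((continuous_const.mul ((hd2c t).mul (hexpcont _))).intervalIntegrable _ _)
      ((continuous_finset_sum S fun ℓ _ =>
        continuous_const.mul ((hxcont t).mul (hexpcont _))).intervalIntegrable _ _)]
    congr 1
    · rw [intervalIntegral.integral_const_mul, ibp t k]
    · rw [intervalIntegral.integral_finset_sum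
        (f := fun ℓ x => (-Complex.I * (c ℓ * Complex.exp (2 * Complex.I * (ℓ : ℂ) * (ω : ℂ) * (t : ℂ)))) *
          (φ t x * Complex.exp (-Complex.I * ((k - ℓ : ℤ) : ℂ) * (x : ℂ)))) fun ℓ _ =>
        ((continuous_const.mul ((hxcont t).mul (hexpcont _))).intervalIntegrable _ _)]
      rw [Finset.mul_sum]
      refine Finset.sum_congr rfl fun ℓ _ => ?_
      rw [intervalIntegral.integral_const_mul]
      simp only [hG]
      ring
  -- assemble
  have hψG : ∀ n : ℤ, ∀ s : ℝ,
      ψ n s = Complex.exp (Complex.I * (α : ℂ) * (n : ℂ) ^ 2 * (s : ℂ)) *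
        ((1 / (2 * (Real.pi : ℂ))) * G n s) := by
    intro n s; rw [hψ n s]
  have hψk : ψ k = fun s : ℝ => Complex.exp (Complex.I * (α : ℂ) * (k : ℂ) ^ 2 * (s : ℂ)) *
      ((1 / (2 * (Real.pi : ℂ))) * G k s) := funext fun s => hψG k s
  have hE1 : HasDerivAt (fun s : ℝ => Complex.exp (Complex.I * (α : ℂ) * (k : ℂ) ^ 2 * (s : ℂ)))
      ((Complex.I * (α : ℂ) * (k : ℂ) ^ 2) *
        Complex.exp (Complex.I * (α : ℂ) * (k : ℂ) ^ 2 * (t : ℂ))) t := hexp _ t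
  have hprod := hE1.mul (hDF.const_mul (1 / (2 * (Real.pi : ℂ))))
  rw [hψk]
  refine HasDerivAt.hasDerivWithinAt ?_
  refine hprod.congr_deriv ?_
  rw [hval]
  simp only [hψG]
  have main : ∑ ℓ ∈ S,
      c ℓ * Complex.exp (2 * Complex.I * (ℓ : ℂ) * (ω : ℂ) * (t : ℂ)) *
        Complex.exp (Complex.I * (α : ℂ) * (ℓ : ℂ) * (2 * (k : ℂ) - (ℓ : ℂ)) * (t : ℂ)) *
        (Complex.exp (Complex.I * (α : ℂ) * ((k - ℓ : ℤ) : ℂ) ^ 2 * (t : ℂ)) *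
          ((1 / (2 * (Real.pi : ℂ))) * G (k - ℓ) t))
      = Complex.exp (Complex.I * (α : ℂ) * (k : ℂ) ^ 2 * (t : ℂ)) *
          ((1 / (2 * (Real.pi : ℂ))) * ∑ ℓ ∈ S,
            (c ℓ * Complex.exp (2 * Complex.I * (ℓ : ℂ) * (ω : ℂ) * (t : ℂ))) * G (k - ℓ) t) := by
    rw [Finset.mul_sum, Finset.mul_sum]
    refine Finset.sum_congr rfl fun ℓ _ => ?_
    have expid : Complex.exp (Complex.I * (α : ℂ) * (k : ℂ) ^ 2 * (t : ℂ))
        = Complex.exp (Complex.I * (α : ℂ) * (ℓ : ℂ) * (2 * (k : ℂ) - (ℓ : ℂ)) * (t : ℂ)) *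
          Complex.exp (Complex.I * (α : ℂ) * ((k - ℓ : ℤ) : ℂ) ^ 2 * (t : ℂ)) := by
      rw [← Complex.exp_add]; congr 1; push_cast; ring
    linear_combination (-(c ℓ * Complex.exp (2 * Complex.I * (ℓ : ℂ) * (ω : ℂ) * (t : ℂ)) *
      ((1 / (2 * (Real.pi : ℂ))) * G (k - ℓ) t))) * expid
  rw [main]
  ring
end
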